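/- For all m, n ∈ ℤ: P_{2m,n} = Q_{3m+1,n}, and P_{2m+1,n} = Q_{3m+d(n),n}, where d(n) = 2 if f_n = R and d(n) = 3 if f_n = L. -/

import Mathlib

/-- The relators of the presentation ⟨A, B, C | A² = B² = C² = 1⟩. -/
def rels : Set (FreeGroup (Fin 3)) :=
  {FreeGroup.of 0 * FreeGroup.of 0, FreeGroup.of 1 * FreeGroup.of 1,
   FreeGroup.of 2 * FreeGroup.of 2}

/-- `G` is the group ⟨A, B, C | A² = B² = C² = 1⟩, the free product of three copies of ℤ/2. -/
abbrev G : Type := PresentedGroup rels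

def A : G := PresentedGroup.of 0
def B : G := PresentedGroup.of 1
def C : G := PresentedGroup.of 2

/-- The distinguished element `D = C·B·A`. -/
def D : G := C * B * A

lemma sq_one (i : Fin 3) (h : FreeGroup.of i * FreeGroup.of i ∈ rels) :
    (PresentedGroup.of (rels := rels) i) * PresentedGroup.of i = 1 := by
  have : (QuotientGroup.mk (FreeGroup.of i * FreeGroup.of i) : G) = 1 :=
    (QuotientGroup.eq_one_iff _).2 (Subgroup.subset_normalClosure h)
  exact this

lemma hB2 : B * B = 1 := sq_one 1 (by simp [rels])

lemma hBinv : B⁻¹ = B := by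
  rw [inv_eq_iff_mul_eq_one, hB2]

lemma hBB (x : G) : B * (B * x) = x := by
  rw [← mul_assoc, hB2, one_mul]

/-- P_{2m,n} = Q_{3m+1,n} and P_{2m+1,n} = Q_{3m+d(n),n}, where d(n) = 2 if f_n = R
and d(n) = 3 if f_n = L. -/
theorem stmt13
    (R L : MulAut G)
    (hRA : R A = A) (hRB : R B = B * C * B⁻¹) (hRC : R C = B)
    (hLA : L A = B) (hLB : L B = B * A * B⁻¹) (hLC : L C = C)
    (P : ℤ → G)
    (hP0 : ∀ m : ℤ, P (3 * m) = D ^ m * A * (D ^ m)⁻¹)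
    (hP1 : ∀ m : ℤ, P (3 * m + 1) = D ^ m * B * (D ^ m)⁻¹)
    (hP2 : ∀ m : ℤ, P (3 * m + 2) = D ^ m * C * (D ^ m)⁻¹)
    (p : ℤ) (hp : 2 ≤ p)
    (f : ℤ → MulAut G) (hfRL : ∀ n : ℤ, f n = R ∨ f n = L)
    (hfper : ∀ n : ℤ, f (n + p) = f n) (hf0 : f 0 = L) (hf1 : f 1 = R)
    (F : ℤ → MulAut G) (hF0 : F 0 = 1) (hF : ∀ n : ℤ, F n = F (n - 1) * f n)
    (Q : ℤ → ℤ → G) (hQ : ∀ m n : ℤ, Q m n = F (n - 1) (P m))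
    (PP : ℤ → ℤ → G)
    (hPPe : ∀ m n : ℤ, PP (2 * m) n = D ^ m * F (n - 1) B * (D ^ m)⁻¹)
    (hPPo : ∀ m n : ℤ, PP (2 * m + 1) n = D ^ m * F n (C * B * C⁻¹) * (D ^ m)⁻¹) :
    ∀ m n : ℤ,
      PP (2 * m) n = Q (3 * m + 1) n ∧
      (f n = R → PP (2 * m + 1) n = Q (3 * m + 2) n) ∧
      (f n = L → PP (2 * m + 1) n = Q (3 * m + 3) n) := by
  -- R and L fix D
  have hRD : R D = D := by
    have h1 : R D = B * (B * C * B⁻¹) * A := by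
      simp only [D, map_mul, hRA, hRB, hRC]
    rw [h1, hBinv]
    calc B * (B * C * B) * A = B * (B * (C * B)) * A := by rw [mul_assoc B C B]
      _ = C * B * A := by rw [hBB]
  have hLD : L D = D := by
    have h1 : L D = C * (B * A * B⁻¹) * B := by
      simp only [D, map_mul, hLA, hLB, hLC]
    rw [h1]
    simp only [D]
    group
  have hfD : ∀ n : ℤ, f n D = D := by
    intro n; rcases hfRL n with h | h <;> rw [h]
    · exact hRD
    · exact hLD
  -- F fixes D
  have hFD : ∀ n : ℤ, F n D = D := by
    intro n
    induction n using Int.induction_on with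
    | zero => rw [hF0]; rfl
    | succ k ih =>
        rw [hF (k + 1)]
        simp only [MulAut.mul_apply, add_sub_cancel_right]
        rw [hfD, ih]
    | pred k ih =>
        have h2 : F (-(k:ℤ)) D = (F (-(k:ℤ) - 1) * f (-(k:ℤ))) D := by rw [← hF]
        rw [MulAut.mul_apply, hfD] at h2
        rw [← h2, ih]
  have hFDz : ∀ (n : ℤ) (m : ℤ), F n (D ^ m) = D ^ m := by
    intro n m; rw [map_zpow, hFD]
  intro m n
  refine ⟨?_, ?_, ?_⟩
  · rw [hPPe, hQ, hP1]
    conv_rhs => rw [map_mul, map_mul, map_inv, hFDz]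
  · intro hfn
    have hRin : R (C * B * C⁻¹) = C := by
      have h5 : R (C * B * C⁻¹) = B * (B * C * B⁻¹) * B⁻¹ := by
        simp only [map_mul, map_inv, hRB, hRC]
      rw [h5, hBinv]
      calc B * (B * C * B) * B = B * (B * (C * (B * B))) := by group
        _ = C := by rw [hB2, mul_one, hBB]
    have key : F n (C * B * C⁻¹) = F (n - 1) C := by
      rw [hF n, hfn, MulAut.mul_apply, hRin]
    rw [hPPo, hQ, hP2, key]
    conv_rhs => rw [map_mul, map_mul, map_inv, hFDz]
  · intro hfn
    have hLin : L (C * B * C⁻¹) = D * A * D⁻¹ := by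
      have h5 : L (C * B * C⁻¹) = C * (B * A * B⁻¹) * C⁻¹ := by
        simp only [map_mul, map_inv, hLB, hLC]
      rw [h5]
      simp only [D]
      group
    have key : F n (C * B * C⁻¹) = D * F (n - 1) A * D⁻¹ := by
      rw [hF n, hfn, MulAut.mul_apply, hLin]
      simp only [map_mul, map_inv, hFD (n - 1)]
    have h3 : (3 * m + 3 : ℤ) = 3 * (m + 1) := by ring
    rw [hPPo, hQ, h3, hP0, key]
    conv_rhs => rw [map_mul, map_mul, map_inv, hFDz]
    have hz : (D : G) ^ (m + 1) = D ^ m * D := by rw [zpow_add_one]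
    rw [hz]
    group
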